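/- Let X be a finite connected pre-ordered set, R a 2-torsion free commutative ring with unity, and L a Lie triple derivation of I(X,R) with coefficients C^{ij}_{xy} defined by L(e_{ij}) = Σ C^{ij}_{xy} e_{xy}. Then for i < j, L(e_{ij}) = Σ_{x<i} C^{ii}_{xi} e_{xj} + C^{ij}_{ij} e_{ij} + Σ_{y>j} C^{jj}_{jy} e_{iy}. -/

import Mathlib

open IncidenceAlgebra
open scoped Classical

variable {R X : Type*}

/-- The matrix unit `e_{x y}` of the incidence algebra (zero if `¬ x ≤ y`). -/
noncomputable def matrixUnit [CommRing R] [Preorder X] [DecidableEq X] (x y : X) :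
    IncidenceAlgebra R X :=
  ⟨fun u v => if u = x ∧ v = y ∧ x ≤ y then 1 else 0, fun a b hab => by
    split_ifs with h
    · exact absurd (by rw [h.1, h.2.1]; exact h.2.2) hab
    · rfl⟩

/-- The Lie bracket `[f,g] = fg - gf`. -/
def lieBr {A : Type*} [Ring A] (f g : A) : A := f * g - g * f

/-- `L` is a Lie triple derivation of the incidence algebra. -/
def IsLieTripleDer [CommRing R] [Preorder X] [DecidableEq X] [LocallyFiniteOrder X]
    (L : IncidenceAlgebra R X →ₗ[R] IncidenceAlgebra R X) : Prop :=
  ∀ f g h : IncidenceAlgebra R X,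
    L (lieBr (lieBr f g) h) =
      lieBr (lieBr (L f) g) h + lieBr (lieBr f (L g)) h + lieBr (lieBr f g) (L h)

/-- `X` is connected: any two points are joined by a chain of comparabilities. -/
def OrdConnected' (X : Type*) [Preorder X] : Prop :=
  ∀ x y : X, Relation.ReflTransGen (fun a b : X => a ≤ b ∨ b ≤ a) x y

/-- `R` is 2-torsion free. -/
def TwoTorsionFree (R : Type*) [CommRing R] : Prop := ∀ r : R, r + r = 0 → r = 0

set_option linter.unusedSectionVars false

section Aux
variable [CommRing R] [Preorder X] [DecidableEq X] [LocallyFiniteOrder X]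

lemma matrixUnit_apply (a b u v : X) :
    matrixUnit (R := R) a b u v = if u = a ∧ v = b ∧ a ≤ b then 1 else 0 := rfl

lemma mul_matrixUnit (f : IncidenceAlgebra R X) (a b u v : X) :
    (f * matrixUnit (R := R) a b) u v = if v = b ∧ a ≤ b then f u a else 0 := by
  rw [IncidenceAlgebra.mul_apply]
  by_cases h : v = b ∧ a ≤ b
  · obtain ⟨rfl, hab⟩ := h
    rw [if_pos ⟨rfl, hab⟩]
    simp only [matrixUnit_apply, hab, and_true, mul_ite, mul_one, mul_zero]
    rw [Finset.sum_ite_eq' (Finset.Icc u v) a (f u)]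
    by_cases hu : u ≤ a
    · rw [if_pos (Finset.mem_Icc.2 ⟨hu, hab⟩)]
    · rw [if_neg (fun hm => hu (Finset.mem_Icc.1 hm).1),
        IncidenceAlgebra.apply_eq_zero_of_not_le hu]
  · rw [if_neg h]
    refine Finset.sum_eq_zero fun x _ => ?_
    rw [matrixUnit_apply, if_neg (fun hc => h ⟨hc.2.1, hc.2.2⟩), mul_zero]

lemma matrixUnit_mul (f : IncidenceAlgebra R X) (a b u v : X) :
    (matrixUnit (R := R) a b * f) u v = if u = a ∧ a ≤ b then f b v else 0 := by
  rw [IncidenceAlgebra.mul_apply]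
  by_cases h : u = a ∧ a ≤ b
  · obtain ⟨rfl, hab⟩ := h
    rw [if_pos ⟨rfl, hab⟩]
    simp only [matrixUnit_apply, hab, true_and, and_true, ite_mul, one_mul, zero_mul]
    rw [Finset.sum_ite_eq' (Finset.Icc u v) b (fun x => f x v)]
    by_cases hb : b ≤ v
    · rw [if_pos (Finset.mem_Icc.2 ⟨hab, hb⟩)]
    · rw [if_neg (fun hm => hb (Finset.mem_Icc.1 hm).2),
        IncidenceAlgebra.apply_eq_zero_of_not_le hb]
  · rw [if_neg h]
    refine Finset.sum_eq_zero fun x _ => ?_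
    rw [matrixUnit_apply, if_neg (fun hc => h ⟨hc.1, hc.2.2⟩), zero_mul]

lemma lieBr_matrixUnit_apply (f : IncidenceAlgebra R X) (a b u v : X) :
    lieBr f (matrixUnit (R := R) a b) u v
      = (if v = b ∧ a ≤ b then f u a else 0) - (if u = a ∧ a ≤ b then f b v else 0) := by
  rw [lieBr, IncidenceAlgebra.sub_apply, mul_matrixUnit, matrixUnit_mul]

lemma matrixUnit_lieBr_apply (f : IncidenceAlgebra R X) (a b u v : X) :
    lieBr (matrixUnit (R := R) a b) f u v
      = (if u = a ∧ a ≤ b then f b v else 0) - (if v = b ∧ a ≤ b then f u a else 0) := by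
  rw [lieBr, IncidenceAlgebra.sub_apply, mul_matrixUnit, matrixUnit_mul]

lemma lieBr_neg_left {A : Type*} [Ring A] (f g : A) : lieBr (-f) g = -(lieBr f g) := by
  simp only [lieBr, neg_mul, mul_neg, neg_sub]; abel

lemma lieBr_sub_left {A : Type*} [Ring A] (f g h : A) :
    lieBr (f - g) h = lieBr f h - lieBr g h := by
  simp only [lieBr, sub_mul, mul_sub]; abel

variable {i j : X}

lemma br_jj (hij : i ≤ j) (hne : i ≠ j) :
    lieBr (matrixUnit (R := R) i j) (matrixUnit j j) = matrixUnit i j := by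
  ext u v _
  rw [lieBr_matrixUnit_apply]
  simp only [matrixUnit_apply, le_refl, and_true, hij]
  by_cases hv : v = j <;> by_cases hu : u = j <;>
    simp_all [hne, Ne.symm hne]

lemma br_ii (hij : i ≤ j) (hne : i ≠ j) :
    lieBr (matrixUnit (R := R) i i) (matrixUnit i j) = matrixUnit i j := by
  ext u v _
  rw [matrixUnit_lieBr_apply]
  simp only [matrixUnit_apply, le_refl, and_true, hij]
  by_cases hv : v = i <;> by_cases hu : u = i <;>
    simp_all [hne, Ne.symm hne]

lemma br_jj' (hij : i ≤ j) (hne : i ≠ j) :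
    lieBr (matrixUnit (R := R) j j) (matrixUnit i j) = -(matrixUnit i j) := by
  ext u v _
  rw [matrixUnit_lieBr_apply]
  simp only [matrixUnit_apply, IncidenceAlgebra.neg_apply, le_refl, true_and, and_true, hij]
  by_cases hv : v = j <;> by_cases hu : u = j <;>
    simp_all [hne, Ne.symm hne]

lemma br_ii' (hij : i ≤ j) (hne : i ≠ j) :
    lieBr (matrixUnit (R := R) i j) (matrixUnit i i) = -(matrixUnit i j) := by
  ext u v _
  rw [lieBr_matrixUnit_apply]
  simp only [matrixUnit_apply, IncidenceAlgebra.neg_apply, le_refl, true_and, and_true, hij]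
  by_cases hv : v = i <;> by_cases hu : u = i <;>
    simp_all [hne, Ne.symm hne]

lemma br_star2_arg (hij : i ≤ j) (hne : i ≠ j) :
    lieBr (lieBr (matrixUnit (R := R) i j) (matrixUnit i i)) (matrixUnit i i)
      = matrixUnit i j := by
  rw [br_ii' hij hne, lieBr_neg_left, br_ii' hij hne, neg_neg]

lemma br_c1 (hij : i ≤ j) (hji : j ≤ i) (hne : i ≠ j) :
    lieBr (matrixUnit (R := R) i j) (matrixUnit j i)
      = matrixUnit i i - matrixUnit j j := by
  ext u v _
  rw [lieBr_matrixUnit_apply, IncidenceAlgebra.sub_apply]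
  simp only [matrixUnit_apply, le_refl, and_true, hij, hji]
  by_cases hv : v = i <;> by_cases hu : u = j <;> by_cases hu' : u = i <;> by_cases hv' : v = j <;>
    simp_all [hne, Ne.symm hne]

lemma br_c2 (hij : i ≤ j) (hne : i ≠ j) :
    lieBr (matrixUnit (R := R) i i - matrixUnit j j) (matrixUnit i j)
      = matrixUnit i j + matrixUnit i j := by
  rw [lieBr_sub_left, br_ii hij hne, br_jj' hij hne, sub_neg_eq_add]

end Aux

section Facts
variable [CommRing R] [Preorder X] [DecidableEq X] [LocallyFiniteOrder X]
variable {L : IncidenceAlgebra R X →ₗ[R] IncidenceAlgebra R X} {i j : X}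

set_option maxHeartbeats 1000000 in
lemma factA (hL : IsLieTripleDer L) (hij : i ≤ j) (hne : i ≠ j)
    (u v : X) (hu : u ≠ j) (hv : v ≠ j) :
    L (matrixUnit i j) u v = if u = i then L (matrixUnit j j) j v else 0 := by
  have hA := hL (matrixUnit i j) (matrixUnit j j) (matrixUnit j j)
  rw [br_jj hij hne, br_jj hij hne] at hA
  have h := congrFun (DFunLike.congr_fun hA u) v
  simp only [IncidenceAlgebra.add_apply, lieBr_matrixUnit_apply, matrixUnit_lieBr_apply,
    matrixUnit_apply] at h
  simp only [hu, hv, hne, Ne.symm hne, le_refl, and_true, true_and, and_false, false_and,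
    if_false, if_true, eq_self_iff_true] at h
  by_cases hui : u = i
  · subst hui
    rw [if_pos rfl]
    simp only [hij, le_refl, and_true, true_and, if_true, ite_true, and_self] at h
    linear_combination h
  · rw [if_neg hui]
    simp only [hui, if_false, false_and, and_false, ite_false] at h
    linear_combination h

set_option maxHeartbeats 1000000 in
lemma factB (hL : IsLieTripleDer L) (hij : i ≤ j) (hne : i ≠ j)
    (u : X) (hu : u ≠ i) :
    L (matrixUnit i j) u j = L (matrixUnit i i) u i := by
  have hB := hL (matrixUnit i j) (matrixUnit i i) (matrixUnit i i)
  rw [show lieBr (lieBr (matrixUnit (R := R) i j) (matrixUnit i i)) (matrixUnit i i)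
        = matrixUnit i j from br_star2_arg hij hne] at hB
  rw [br_ii' hij hne, lieBr_neg_left] at hB
  have h := congrFun (DFunLike.congr_fun hB u) j
  simp only [IncidenceAlgebra.add_apply, IncidenceAlgebra.neg_apply, lieBr_matrixUnit_apply,
    matrixUnit_lieBr_apply, matrixUnit_apply] at h
  simp only [hu, hij, hne, Ne.symm hne, le_refl, and_true, true_and, and_false, false_and,
    if_false, if_true, ite_true, ite_false, and_self] at h
  linear_combination h

set_option maxHeartbeats 1000000 in
lemma factC (hL : IsLieTripleDer L) (hij : i ≤ j) (hne : i ≠ j)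
    (v : X) (hvi : v ≠ i) (hvj : v ≠ j) :
    L (matrixUnit i j) j v = 0 := by
  have hB := hL (matrixUnit i j) (matrixUnit i i) (matrixUnit i i)
  rw [show lieBr (lieBr (matrixUnit (R := R) i j) (matrixUnit i i)) (matrixUnit i i)
        = matrixUnit i j from br_star2_arg hij hne] at hB
  rw [br_ii' hij hne, lieBr_neg_left] at hB
  have h := congrFun (DFunLike.congr_fun hB j) v
  simp only [IncidenceAlgebra.add_apply, IncidenceAlgebra.neg_apply, lieBr_matrixUnit_apply,
    matrixUnit_lieBr_apply, matrixUnit_apply] at h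
  simp only [hvi, hvj, hij, hne, Ne.symm hne, le_refl, and_true, true_and, and_false, false_and,
    if_false, if_true, ite_true, ite_false, and_self] at h
  linear_combination h

set_option maxHeartbeats 1000000 in
lemma factD (htf : TwoTorsionFree R) (hL : IsLieTripleDer L) (hij : i ≤ j) (hne : i ≠ j) :
    L (matrixUnit i j) j i = 0 := by
  by_cases hji : j ≤ i
  · have hC := hL (matrixUnit i j) (matrixUnit j i) (matrixUnit i j)
    rw [br_c1 hij hji hne, br_c2 hij hne, map_add, lieBr_sub_left] at hC
    have h := congrFun (DFunLike.congr_fun hC j) i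
    simp only [IncidenceAlgebra.add_apply, IncidenceAlgebra.sub_apply, lieBr_matrixUnit_apply,
      matrixUnit_lieBr_apply, matrixUnit_apply] at h
    simp only [hij, hji, hne, Ne.symm hne, le_refl, and_true, true_and, and_false, false_and,
      if_false, if_true, ite_true, ite_false, and_self] at h
    refine htf _ (htf _ ?_)
    linear_combination h
  · exact IncidenceAlgebra.apply_eq_zero_of_not_le hji _

end Facts

section Sums
variable [CommRing R] [Preorder X] [DecidableEq X] [LocallyFiniteOrder X]

lemma sumApply {ι : Type*} (s : Finset ι) (f : ι → IncidenceAlgebra R X) (u v : X) :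
    (∑ x ∈ s, f x) u v = ∑ x ∈ s, f x u v := by
  induction s using Finset.cons_induction with
  | empty => rfl
  | cons a s ha ih => rw [Finset.sum_cons, Finset.sum_cons, IncidenceAlgebra.add_apply, ih]

lemma sum_smul_matrixUnit_row [Fintype X] (p : X → Prop) [DecidablePred p]
    (c : X → R) (b u v : X) :
    (∑ x ∈ Finset.univ.filter p, c x • matrixUnit (R := R) x b) u v
      = if p u ∧ v = b ∧ u ≤ b then c u else 0 := by
  rw [sumApply]
  by_cases h : p u ∧ v = b ∧ u ≤ b
  · rw [if_pos h]
    rw [Finset.sum_eq_single u]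
    · rw [IncidenceAlgebra.constSMul_apply, matrixUnit_apply, if_pos ⟨rfl, h.2⟩,
        smul_eq_mul, mul_one]
    · intro x hx hxu
      rw [IncidenceAlgebra.constSMul_apply, matrixUnit_apply,
        if_neg (fun hc : u = x ∧ v = b ∧ x ≤ b => hxu hc.1.symm), smul_zero]
    · intro hnu
      exact absurd (Finset.mem_filter.2 ⟨Finset.mem_univ u, h.1⟩) hnu
  · rw [if_neg h]
    refine Finset.sum_eq_zero fun x hx => ?_
    rw [IncidenceAlgebra.constSMul_apply, matrixUnit_apply]
    by_cases hc : u = x ∧ v = b ∧ x ≤ b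
    · exact absurd ⟨hc.1.symm ▸ (Finset.mem_filter.1 hx).2, hc.2.1, hc.1.symm ▸ hc.2.2⟩ h
    · rw [if_neg hc, smul_zero]

lemma sum_smul_matrixUnit_col [Fintype X] (p : X → Prop) [DecidablePred p]
    (c : X → R) (a u v : X) :
    (∑ y ∈ Finset.univ.filter p, c y • matrixUnit (R := R) a y) u v
      = if p v ∧ u = a ∧ a ≤ v then c v else 0 := by
  rw [sumApply]
  by_cases h : p v ∧ u = a ∧ a ≤ v
  · rw [if_pos h]
    rw [Finset.sum_eq_single v]
    · rw [IncidenceAlgebra.constSMul_apply, matrixUnit_apply, if_pos ⟨h.2.1, rfl, h.2.2⟩,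
        smul_eq_mul, mul_one]
    · intro x hx hxv
      rw [IncidenceAlgebra.constSMul_apply, matrixUnit_apply,
        if_neg (fun hc : u = a ∧ v = x ∧ a ≤ x => hxv hc.2.1.symm), smul_zero]
    · intro hnv
      exact absurd (Finset.mem_filter.2 ⟨Finset.mem_univ v, h.1⟩) hnv
  · rw [if_neg h]
    refine Finset.sum_eq_zero fun x hx => ?_
    rw [IncidenceAlgebra.constSMul_apply, matrixUnit_apply]
    by_cases hc : u = a ∧ v = x ∧ a ≤ x
    · exact absurd ⟨hc.2.1.symm ▸ (Finset.mem_filter.1 hx).2, hc.1, hc.2.1.symm ▸ hc.2.2⟩ h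
    · rw [if_neg hc, smul_zero]

end Sums

set_option maxHeartbeats 1000000 in
/-- Form of `L(e_{ij})` for `i < j`:
`L(e_{ij}) = Σ_{x<i} C^{ii}_{xi} e_{xj} + C^{ij}_{ij} e_{ij} + Σ_{y>j} C^{jj}_{jy} e_{iy}`. -/
theorem lieTripleDer_offDiag_matrixUnit [CommRing R] [Preorder X] [DecidableEq X]
    [Fintype X] [LocallyFiniteOrder X]
    (htf : TwoTorsionFree R) (hconn : OrdConnected' X)
    (L : IncidenceAlgebra R X →ₗ[R] IncidenceAlgebra R X) (hL : IsLieTripleDer L) :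
    ∀ i j : X, i ≤ j → i ≠ j →
      L (matrixUnit i j) =
        (∑ x ∈ Finset.univ.filter (fun x : X => x ≤ i ∧ x ≠ i),
            L (matrixUnit i i) x i • matrixUnit x j)
        + L (matrixUnit i j) i j • matrixUnit i j
        + ∑ y ∈ Finset.univ.filter (fun y : X => j ≤ y ∧ y ≠ j),
            L (matrixUnit j j) j y • matrixUnit i y := by
  intro i j hij hne
  ext u v _
  rw [IncidenceAlgebra.add_apply, IncidenceAlgebra.add_apply,
    sum_smul_matrixUnit_row, sum_smul_matrixUnit_col,
    IncidenceAlgebra.constSMul_apply, matrixUnit_apply, smul_eq_mul]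
  by_cases hvj : v = j
  · subst hvj
    by_cases hui : u = i
    · subst hui
      simp [hij, hne]
    · have hf := factB hL hij hne u hui
      by_cases hle : u ≤ i
      · have huj : u ≤ v := le_trans hle hij
        simp only [hle, hui, huj, hij, hne, le_refl, not_true, and_true, true_and, and_false,
          false_and, if_true, if_false, ite_true, ite_false, and_self, ne_eq,
          not_false_eq_true, mul_zero, mul_one, add_zero, zero_add]
        exact hf
      · have hFz : L (matrixUnit i i) u i = 0 :=
          IncidenceAlgebra.apply_eq_zero_of_not_le hle _
        rw [hf, hFz]
        simp [hle, hui]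
  · by_cases hui : u = i
    · subst hui
      have hf := factA hL hij hne u v hne hvj
      rw [if_pos rfl] at hf
      by_cases hjv : j ≤ v
      · have hiv : u ≤ v := le_trans hij hjv
        rw [hf]
        simp [hjv, hvj, hiv, hvj, hne]
      · have hEz : L (matrixUnit j j) j v = 0 :=
          IncidenceAlgebra.apply_eq_zero_of_not_le hjv _
        rw [hf, hEz]
        simp [hjv, hvj]
    · simp only [hvj, hui, and_false, false_and, and_true, if_false, ite_false, mul_zero,
        add_zero, zero_add]
      by_cases huj : u = j
      · subst huj
        by_cases hvi : v = i
        · subst hvi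
          exact factD htf hL hij hne
        · exact factC hL hij hne v hvi hvj
      · have hf := factA hL hij hne u v huj hvj
        rw [hf, if_neg hui]
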